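/- For every p ∈ ℝ², setting p₀ = √(1+|p|²) and p̂ = p/p₀, the integral over the closed unit disc in ℝ² satisfies ∫_{|ξ|≤1} (1 + p̂·ξ)^{-3/2} (1 - |ξ|²)^{-1/2} dξ ≤ 4π p₀. -/

import Mathlib

open MeasureTheory Set ENNReal RealInnerProductSpace

lemma stmt_2_aux_intR (b : ℝ) : ∫ y in (0:ℝ)..b, (b - y) ^ (-(1:ℝ)/2) = 2 * Real.sqrt b := by
  rw [show (fun y => (b - y) ^ (-(1:ℝ)/2)) = fun y => ((fun u : ℝ => u ^ (-(1:ℝ)/2)) (b - y)) from rfl,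
    intervalIntegral.integral_comp_sub_left (fun u : ℝ => u ^ (-(1:ℝ)/2)) b]
  rw [sub_self, sub_zero, integral_rpow (Or.inl (by norm_num))]
  rw [Real.zero_rpow (by norm_num), show -(1:ℝ)/2 + 1 = 1/2 by norm_num, ← Real.sqrt_eq_rpow]
  ring

lemma stmt_2_aux_intL (b : ℝ) : ∫ y in (-b)..(0:ℝ), (b + y) ^ (-(1:ℝ)/2) = 2 * Real.sqrt b := by
  rw [show (fun y => (b + y) ^ (-(1:ℝ)/2)) = fun y => ((fun u : ℝ => u ^ (-(1:ℝ)/2)) (b + y)) from rfl,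
    intervalIntegral.integral_comp_add_left (fun u : ℝ => u ^ (-(1:ℝ)/2)) b]
  rw [add_neg_cancel, add_zero, integral_rpow (Or.inl (by norm_num))]
  rw [Real.zero_rpow (by norm_num), show -(1:ℝ)/2 + 1 = 1/2 by norm_num, ← Real.sqrt_eq_rpow]
  ring

lemma stmt_2_aux_iiR (b : ℝ) : IntervalIntegrable (fun y => (b - y) ^ (-(1:ℝ)/2)) volume 0 b := by
  have h := (intervalIntegral.intervalIntegrable_rpow' (r := -(1:ℝ)/2) (by norm_num)
      (a := 0) (b := b)).comp_sub_left b
  simpa using h.symm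

lemma stmt_2_aux_iiL (b : ℝ) : IntervalIntegrable (fun y => (b + y) ^ (-(1:ℝ)/2)) volume (-b) 0 := by
  have h := (intervalIntegral.intervalIntegrable_rpow' (r := -(1:ℝ)/2) (by norm_num)
      (a := 0) (b := b)).comp_add_left b
  simpa [neg_sub, sub_eq_add_neg] using h

lemma stmt_2_aux_pieceR (b : ℝ) (hb : 0 < b) :
    ∫⁻ y in Ioc (0:ℝ) b, ENNReal.ofReal ((b^2 - y^2) ^ (-(1:ℝ)/2)) ≤ ENNReal.ofReal 2 := by
  have step1 : ∫⁻ y in Ioc (0:ℝ) b, ENNReal.ofReal ((b^2 - y^2) ^ (-(1:ℝ)/2))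
      ≤ ∫⁻ y in Ioc (0:ℝ) b, ENNReal.ofReal (b ^ (-(1:ℝ)/2) * (b - y) ^ (-(1:ℝ)/2)) := by
    apply setLIntegral_mono (by fun_prop)
    intro y hy
    apply ENNReal.ofReal_le_ofReal
    rcases eq_or_lt_of_le hy.2 with h | h
    · subst h
      rw [sub_self, Real.zero_rpow (by norm_num)]
      exact mul_nonneg (Real.rpow_nonneg hb.le _) (Real.rpow_nonneg (by linarith) _)
    · rw [← Real.mul_rpow hb.le (by linarith)]
      refine Real.rpow_le_rpow_of_nonpos (by nlinarith) ?_ (by norm_num)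
      nlinarith [mul_nonneg hy.1.le (sub_nonneg.2 h.le)]
  refine step1.trans ?_
  have hnn : 0 ≤ᵐ[volume.restrict (Ioc (0:ℝ) b)]
      fun y => b ^ (-(1:ℝ)/2) * (b - y) ^ (-(1:ℝ)/2) := by
    filter_upwards [ae_restrict_mem measurableSet_Ioc] with y hy
    exact mul_nonneg (Real.rpow_nonneg hb.le _) (Real.rpow_nonneg (by linarith [hy.2]) _)
  have hint : IntegrableOn (fun y => b ^ (-(1:ℝ)/2) * (b - y) ^ (-(1:ℝ)/2)) (Ioc (0:ℝ) b) :=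
    ((stmt_2_aux_iiR b).const_mul _).1
  rw [← ofReal_integral_eq_lintegral_ofReal hint hnn]
  apply ENNReal.ofReal_le_ofReal
  rw [← intervalIntegral.integral_of_le hb.le, intervalIntegral.integral_const_mul, stmt_2_aux_intR b,
    Real.sqrt_eq_rpow,
    show b ^ (-(1:ℝ)/2) * (2 * b ^ ((1:ℝ)/2)) = 2 * (b ^ (-(1:ℝ)/2 + (1:ℝ)/2)) by
      rw [Real.rpow_add hb]; ring]
  norm_num

lemma stmt_2_aux_pieceL (b : ℝ) (hb : 0 < b) :
    ∫⁻ y in Ioc (-b) (0:ℝ), ENNReal.ofReal ((b^2 - y^2) ^ (-(1:ℝ)/2)) ≤ ENNReal.ofReal 2 := by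
  have step1 : ∫⁻ y in Ioc (-b) (0:ℝ), ENNReal.ofReal ((b^2 - y^2) ^ (-(1:ℝ)/2))
      ≤ ∫⁻ y in Ioc (-b) (0:ℝ), ENNReal.ofReal (b ^ (-(1:ℝ)/2) * (b + y) ^ (-(1:ℝ)/2)) := by
    apply setLIntegral_mono (by fun_prop)
    intro y hy
    apply ENNReal.ofReal_le_ofReal
    rw [← Real.mul_rpow hb.le (by linarith [hy.1])]
    refine Real.rpow_le_rpow_of_nonpos (by nlinarith [hy.1, hy.2]) ?_ (by norm_num)
    nlinarith [mul_nonneg (neg_nonneg.2 hy.2) (by linarith [hy.1] : (0:ℝ) ≤ b + y)]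
  refine step1.trans ?_
  have hnn : 0 ≤ᵐ[volume.restrict (Ioc (-b) (0:ℝ))]
      fun y => b ^ (-(1:ℝ)/2) * (b + y) ^ (-(1:ℝ)/2) := by
    filter_upwards [ae_restrict_mem measurableSet_Ioc] with y hy
    exact mul_nonneg (Real.rpow_nonneg hb.le _) (Real.rpow_nonneg (by linarith [hy.1]) _)
  have hint : IntegrableOn (fun y => b ^ (-(1:ℝ)/2) * (b + y) ^ (-(1:ℝ)/2)) (Ioc (-b) (0:ℝ)) :=
    ((stmt_2_aux_iiL b).const_mul _).1
  rw [← ofReal_integral_eq_lintegral_ofReal hint hnn]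
  apply ENNReal.ofReal_le_ofReal
  rw [← intervalIntegral.integral_of_le (by linarith), intervalIntegral.integral_const_mul, stmt_2_aux_intL b,
    Real.sqrt_eq_rpow,
    show b ^ (-(1:ℝ)/2) * (2 * b ^ ((1:ℝ)/2)) = 2 * (b ^ (-(1:ℝ)/2 + (1:ℝ)/2)) by
      rw [Real.rpow_add hb]; ring]
  norm_num

lemma stmt_2_aux_slice4 (b : ℝ) (hb : 0 < b) :
    ∫⁻ y in Icc (-b) b, ENNReal.ofReal ((b^2 - y^2) ^ (-(1:ℝ)/2)) ≤ ENNReal.ofReal 4 := by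
  rw [← Measure.restrict_congr_set Ioc_ae_eq_Icc,
    ← Ioc_union_Ioc_eq_Ioc (by linarith : -b ≤ 0) hb.le,
    lintegral_union measurableSet_Ioc (Ioc_disjoint_Ioc_of_le le_rfl)]
  calc _ ≤ ENNReal.ofReal 2 + ENNReal.ofReal 2 := add_le_add (stmt_2_aux_pieceL b hb) (stmt_2_aux_pieceR b hb)
    _ = ENNReal.ofReal 4 := by rw [← ENNReal.ofReal_add] <;> norm_num

lemma stmt_2_aux_inner_bound (a x : ℝ) (ha0 : 0 ≤ a) (ha1 : a < 1) :
    (∫⁻ y in {y : ℝ | x^2 + y^2 ≤ 1},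
      ENNReal.ofReal ((1 + a*x) ^ (-(3:ℝ)/2) * (1 - (x^2 + y^2)) ^ (-(1:ℝ)/2)))
    ≤ (Icc (-1:ℝ) 1).indicator (fun t => ENNReal.ofReal (4 * (1 + a*t) ^ (-(3:ℝ)/2))) x := by
  by_cases hx : x ∈ Icc (-1:ℝ) 1
  case neg =>
    have he : {y : ℝ | x^2 + y^2 ≤ 1} = ∅ := by
      ext y; simp only [mem_setOf_eq, mem_empty_iff_false, iff_false, not_le]
      simp only [mem_Icc, not_and_or, not_le] at hx
      rcases hx with h | h <;> nlinarith [sq_nonneg y]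
    simp [he]
  case pos =>
    rw [indicator_of_mem hx]
    obtain ⟨hx1, hx2⟩ := hx
    have hpos : 0 < 1 + a*x := by nlinarith
    by_cases hxb : x^2 = 1
    · have hs : {y : ℝ | x^2 + y^2 ≤ 1} = {0} := by
        ext y; simp only [mem_setOf_eq, mem_singleton_iff]
        constructor
        · intro h; nlinarith [sq_nonneg y]
        · intro h; subst h; simp [hxb]
      rw [hs, setLIntegral_measure_zero _ _ (measure_singleton 0)]
      exact zero_le
    · set b := Real.sqrt (1 - x^2) with hbdef
      have hx2lt : x^2 < 1 := lt_of_le_of_ne (by nlinarith) hxb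
      have hb : 0 < b := Real.sqrt_pos.2 (by linarith)
      have hb2 : b^2 = 1 - x^2 := Real.sq_sqrt (by linarith)
      have hslice : {y : ℝ | x^2 + y^2 ≤ 1} = Icc (-b) b := by
        ext y; simp only [mem_setOf_eq, mem_Icc]
        constructor
        · intro h; constructor <;> nlinarith
        · intro h; obtain ⟨h1, h2⟩ := h; nlinarith
      rw [hslice]
      have hrw : ∀ y : ℝ,
          ENNReal.ofReal ((1 + a*x) ^ (-(3:ℝ)/2) * (1 - (x^2 + y^2)) ^ (-(1:ℝ)/2))
          = ENNReal.ofReal ((1 + a*x) ^ (-(3:ℝ)/2)) * ENNReal.ofReal ((b^2 - y^2) ^ (-(1:ℝ)/2)) := by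
        intro y
        rw [show 1 - (x^2 + y^2) = b^2 - y^2 by rw [hb2]; ring,
          ENNReal.ofReal_mul (Real.rpow_nonneg hpos.le _)]
      simp_rw [hrw]
      rw [lintegral_const_mul' _ _ ENNReal.ofReal_ne_top]
      calc _ ≤ ENNReal.ofReal ((1 + a*x) ^ (-(3:ℝ)/2)) * ENNReal.ofReal 4 :=
            mul_le_mul_right (stmt_2_aux_slice4 b hb) _
        _ = ENNReal.ofReal (4 * (1 + a*x) ^ (-(3:ℝ)/2)) := by
            rw [← ENNReal.ofReal_mul (Real.rpow_nonneg hpos.le _), mul_comm]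

lemma stmt_2_aux_outer (a : ℝ) (ha0 : 0 ≤ a) (ha1 : a < 1) :
    ∫ x in (-1:ℝ)..1, 4 * (1 + a*x) ^ (-(3:ℝ)/2) ≤ 4 * Real.pi / Real.sqrt (1 - a^2) := by
  have hpos : ∀ x ∈ uIcc (-1:ℝ) 1, 0 < 1 + a*x := by
    intro x hx
    rw [uIcc_of_le (by norm_num)] at hx
    nlinarith [hx.1, hx.2]
  rcases eq_or_lt_of_le ha0 with ha | ha
  · subst ha
    simp only [zero_mul, add_zero, Real.one_rpow, mul_one]
    rw [intervalIntegral.integral_const]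
    norm_num
    nlinarith [Real.pi_gt_three]
  · -- a > 0
    have hcont : ContinuousOn (fun x => (1 + a*x) ^ (-(3:ℝ)/2)) (uIcc (-1:ℝ) 1) :=
      ContinuousOn.rpow_const
        ((continuous_const.add (continuous_const.mul continuous_id)).continuousOn)
        (fun x hx => Or.inl (hpos x hx).ne')
    have hint : IntervalIntegrable (fun x => (1 + a*x) ^ (-(3:ℝ)/2)) volume (-1) 1 :=
      hcont.intervalIntegrable
    have hderiv : ∀ x ∈ uIcc (-1:ℝ) 1,
        HasDerivAt (fun x => -(2/a) * (1 + a*x) ^ (-(1:ℝ)/2)) ((1 + a*x) ^ (-(3:ℝ)/2)) x := by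
      intro x hx
      have h1 : HasDerivAt (fun x : ℝ => 1 + a*x) a x := by
        simpa using ((hasDerivAt_id x).const_mul a).const_add 1
      have h2 := (h1.rpow_const (p := -(1:ℝ)/2) (Or.inl (hpos x hx).ne')).const_mul (-(2/a))
      refine h2.congr_deriv (Eq.symm ?_)
      rw [show -(1:ℝ)/2 - 1 = -(3:ℝ)/2 by norm_num]
      field_simp
    have hval : ∫ x in (-1:ℝ)..1, (1 + a*x) ^ (-(3:ℝ)/2)
        = -(2/a) * (1 + a*1) ^ (-(1:ℝ)/2) - -(2/a) * (1 + a*(-1)) ^ (-(1:ℝ)/2) :=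
      intervalIntegral.integral_eq_sub_of_hasDerivAt hderiv hint
    rw [intervalIntegral.integral_const_mul, hval]
    set u := Real.sqrt (1+a) with hu_def
    set v := Real.sqrt (1-a) with hv_def
    have hu : 0 < u := Real.sqrt_pos.2 (by linarith)
    have hv : 0 < v := Real.sqrt_pos.2 (by linarith)
    have hu2 : u^2 = 1 + a := Real.sq_sqrt (by linarith)
    have hv2 : v^2 = 1 - a := Real.sq_sqrt (by linarith)
    have hru : (1 + a*1) ^ (-(1:ℝ)/2) = u⁻¹ := by
      rw [mul_one, show -(1:ℝ)/2 = -((1:ℝ)/2) by norm_num,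
        Real.rpow_neg (by linarith), ← Real.sqrt_eq_rpow]
    have hrv : (1 + a*(-1)) ^ (-(1:ℝ)/2) = v⁻¹ := by
      rw [show 1 + a*(-1) = 1 - a by ring, show -(1:ℝ)/2 = -((1:ℝ)/2) by norm_num,
        Real.rpow_neg (by linarith), ← Real.sqrt_eq_rpow]
    have hsq : Real.sqrt (1 - a^2) = u * v := by
      rw [show 1 - a^2 = (1+a)*(1-a) by ring, Real.sqrt_mul (by linarith)]
    rw [hru, hrv, hsq]
    have hd : 0 ≤ u - v := by nlinarith
    have hs2 : 2 ≤ (u+v)^2 := by nlinarith [mul_pos hu hv]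
    have h9 : 9 ≤ Real.pi^2 := by nlinarith [Real.pi_gt_three]
    have hπs : 4 ≤ Real.pi * (u+v) := by
      nlinarith [mul_pos Real.pi_pos (by linarith : (0:ℝ) < u + v),
        mul_le_mul h9 hs2 (by norm_num) (sq_nonneg Real.pi)]
    have huv : (u-v)*(u+v) = 2*a := by nlinarith
    have stmt_2_aux_key : 2*(u-v) ≤ Real.pi * a := by
      nlinarith [mul_nonneg hd (sub_nonneg.2 hπs)]
    have hlhs : 4 * (-(2/a) * u⁻¹ - -(2/a) * v⁻¹) = (8*(u-v))/(a*(u*v)) := by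
      field_simp
      ring
    rw [hlhs, div_le_div_iff₀ (by positivity) (by positivity)]
    have hfin : 0 ≤ (Real.pi * a - 2*(u-v)) * (u*v) :=
      mul_nonneg (by linarith) (mul_pos hu hv).le
    ring_nf at hfin ⊢
    linarith

lemma stmt_2_aux_planar (a : ℝ) (ha0 : 0 ≤ a) (ha1 : a < 1) :
    (∫⁻ z in {z : ℝ × ℝ | z.1^2 + z.2^2 ≤ 1},
      ENNReal.ofReal ((1 + a*z.1) ^ (-(3:ℝ)/2) * (1 - (z.1^2 + z.2^2)) ^ (-(1:ℝ)/2)))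
    ≤ ENNReal.ofReal (4 * Real.pi / Real.sqrt (1 - a^2)) := by
  have hS : MeasurableSet {z : ℝ × ℝ | z.1^2 + z.2^2 ≤ 1} :=
    measurableSet_le (by fun_prop) measurable_const
  set g : ℝ × ℝ → ℝ≥0∞ := fun z =>
    ENNReal.ofReal ((1 + a*z.1) ^ (-(3:ℝ)/2) * (1 - (z.1^2 + z.2^2)) ^ (-(1:ℝ)/2)) with hg
  have hgm : Measurable g := by
    apply Measurable.ennreal_ofReal
    exact ((measurable_const.add (measurable_fst.const_mul a)).pow measurable_const).mul
      ((measurable_const.sub ((measurable_fst.pow measurable_const).add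
        (measurable_snd.pow measurable_const))).pow measurable_const)
  rw [← lintegral_indicator hS, Measure.volume_eq_prod,
    lintegral_prod _ ((hgm.indicator hS).aemeasurable)]
  have hslice : ∀ x : ℝ, MeasurableSet {y : ℝ | x^2 + y^2 ≤ 1} :=
    fun x => measurableSet_le (by fun_prop) measurable_const
  have inner_eq : ∀ x : ℝ, ∫⁻ y, {z : ℝ × ℝ | z.1^2 + z.2^2 ≤ 1}.indicator g (x, y)
      = ∫⁻ y in {y : ℝ | x^2 + y^2 ≤ 1}, g (x, y) := by
    intro x
    rw [← lintegral_indicator (hslice x)]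
    apply lintegral_congr
    intro y
    by_cases h : x^2 + y^2 ≤ 1 <;> simp [Set.indicator, h]
  calc ∫⁻ x, ∫⁻ y, {z : ℝ × ℝ | z.1^2 + z.2^2 ≤ 1}.indicator g (x, y)
      = ∫⁻ x, ∫⁻ y in {y : ℝ | x^2 + y^2 ≤ 1}, g (x, y) := by
        congr 1; funext x; exact inner_eq x
    _ ≤ ∫⁻ x, (Icc (-1:ℝ) 1).indicator
          (fun t => ENNReal.ofReal (4 * (1 + a*t) ^ (-(3:ℝ)/2))) x :=
        lintegral_mono fun x => stmt_2_aux_inner_bound a x ha0 ha1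
    _ = ∫⁻ x in Icc (-1:ℝ) 1, ENNReal.ofReal (4 * (1 + a*x) ^ (-(3:ℝ)/2)) :=
        lintegral_indicator measurableSet_Icc _
    _ ≤ ENNReal.ofReal (4 * Real.pi / Real.sqrt (1 - a^2)) := by
        have hpos : ∀ x ∈ Icc (-1:ℝ) 1, 0 < 1 + a*x := by
          intro x hx; nlinarith [hx.1, hx.2]
        have hcont : ContinuousOn (fun x : ℝ => 4 * (1 + a*x) ^ (-(3:ℝ)/2)) (Icc (-1:ℝ) 1) :=
          continuousOn_const.mul (ContinuousOn.rpow_const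
            ((continuous_const.add (continuous_const.mul continuous_id)).continuousOn)
            (fun x hx => Or.inl (hpos x hx).ne'))
        have hint : IntegrableOn (fun x : ℝ => 4 * (1 + a*x) ^ (-(3:ℝ)/2)) (Icc (-1:ℝ) 1) :=
          hcont.integrableOn_Icc
        have hnn : 0 ≤ᵐ[volume.restrict (Icc (-1:ℝ) 1)]
            fun x : ℝ => 4 * (1 + a*x) ^ (-(3:ℝ)/2) := by
          filter_upwards [ae_restrict_mem measurableSet_Icc] with x hx
          exact mul_nonneg (by norm_num) (Real.rpow_nonneg (hpos x hx).le _)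
        rw [← ofReal_integral_eq_lintegral_ofReal hint hnn]
        apply ENNReal.ofReal_le_ofReal
        rw [integral_Icc_eq_integral_Ioc, ← intervalIntegral.integral_of_le (by norm_num : (-1:ℝ) ≤ 1)]
        exact stmt_2_aux_outer a ha0 ha1

lemma stmt_2_aux_keyE (a : ℝ) (ha0 : 0 ≤ a) (ha1 : a < 1) :
    (∫ ξ in Metric.closedBall (0 : EuclideanSpace ℝ (Fin 2)) 1,
      (1 + a * ξ 0) ^ (-(3:ℝ)/2) * (1 - ‖ξ‖^2) ^ (-(1:ℝ)/2))
    ≤ 4 * Real.pi / Real.sqrt (1 - a^2) := by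
  set E := EuclideanSpace ℝ (Fin 2)
  have hRHS : (0:ℝ) ≤ 4 * Real.pi / Real.sqrt (1 - a^2) := by positivity
  have h0m : Measurable fun ξ : E => ξ 0 := (EuclideanSpace.proj (0 : Fin 2)).continuous.measurable
  have hm : Measurable fun ξ : E => (1 + a * ξ 0) ^ (-(3:ℝ)/2) * (1 - ‖ξ‖^2) ^ (-(1:ℝ)/2) :=
    ((measurable_const.add (h0m.const_mul a)).pow measurable_const).mul
      ((measurable_const.sub (measurable_norm.pow measurable_const)).pow measurable_const)
  have hnn : 0 ≤ᵐ[volume.restrict (Metric.closedBall (0:E) 1)]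
      fun ξ : E => (1 + a * ξ 0) ^ (-(3:ℝ)/2) * (1 - ‖ξ‖^2) ^ (-(1:ℝ)/2) := by
    filter_upwards [ae_restrict_mem measurableSet_closedBall] with ξ hξ
    rw [Metric.mem_closedBall, dist_zero_right] at hξ
    have h0 : |ξ 0| ≤ 1 := by
      refine le_trans ?_ hξ
      rw [EuclideanSpace.norm_eq, ← Real.sqrt_sq_eq_abs]
      apply Real.sqrt_le_sqrt
      rw [Fin.sum_univ_two]
      simp only [Real.norm_eq_abs, sq_abs]
      nlinarith [sq_nonneg (ξ 1)]
    obtain ⟨hl, hr⟩ := abs_le.1 h0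
    have h1 : 0 ≤ 1 + a * ξ 0 := by nlinarith
    have h2 : 0 ≤ 1 - ‖ξ‖^2 := by nlinarith [norm_nonneg ξ]
    exact mul_nonneg (Real.rpow_nonneg h1 _) (Real.rpow_nonneg h2 _)
  rw [integral_eq_lintegral_of_nonneg_ae hnn hm.aestronglyMeasurable.restrict]
  -- transport to ℝ × ℝ
  set ψ : (ℝ × ℝ) ≃ᵐ E :=
    (MeasurableEquiv.piFinTwo (fun _ => ℝ)).symm.trans
      (MeasurableEquiv.toLp 2 (Fin 2 → ℝ)).symm.symm with hψ
  have hψp : MeasurePreserving ψ volume volume := by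
    have := ((EuclideanSpace.volume_preserving_symm_measurableEquiv_toLp (Fin 2)).symm).comp
      ((volume_preserving_piFinTwo (fun _ => ℝ)).symm)
    rw [hψ]
    rw [show ⇑((MeasurableEquiv.piFinTwo (fun _ => ℝ)).symm.trans
        (MeasurableEquiv.toLp 2 (Fin 2 → ℝ)).symm.symm)
      = ⇑(MeasurableEquiv.toLp 2 (Fin 2 → ℝ)).symm.symm ∘
        ⇑(MeasurableEquiv.piFinTwo (fun _ => ℝ)).symm from rfl]
    exact this
  have hψ0 : ∀ z : ℝ × ℝ, (ψ z) 0 = z.1 := by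
    intro z
    simp only [hψ, MeasurableEquiv.piFinTwo, MeasurableEquiv.trans_apply,
      MeasurableEquiv.symm_mk, MeasurableEquiv.coe_mk, Equiv.coe_fn_symm_mk]
    rfl
  have hψ1 : ∀ z : ℝ × ℝ, (ψ z) 1 = z.2 := by
    intro z
    simp only [hψ, MeasurableEquiv.piFinTwo, MeasurableEquiv.trans_apply,
      MeasurableEquiv.symm_mk, MeasurableEquiv.coe_mk, Equiv.coe_fn_symm_mk]
    rfl
  have hψn : ∀ z : ℝ × ℝ, ‖ψ z‖^2 = z.1^2 + z.2^2 := by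
    intro z
    rw [EuclideanSpace.norm_eq, Real.sq_sqrt (by positivity)]
    simp [Fin.sum_univ_two, hψ0 z, hψ1 z, sq_abs]
  have hpre : ψ ⁻¹' (Metric.closedBall (0:E) 1) = {z : ℝ × ℝ | z.1^2 + z.2^2 ≤ 1} := by
    ext z
    simp only [mem_preimage, Metric.mem_closedBall, dist_zero_right, mem_setOf_eq]
    rw [← hψn z]
    constructor
    · intro h; nlinarith [norm_nonneg (ψ z)]
    · intro h; nlinarith [norm_nonneg (ψ z)]
  rw [← hψp.setLIntegral_comp_preimage_emb ψ.measurableEmbedding _ _, hpre]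
  have : ∀ z : ℝ × ℝ,
      ENNReal.ofReal ((1 + a * (ψ z) 0) ^ (-(3:ℝ)/2) * (1 - ‖ψ z‖^2) ^ (-(1:ℝ)/2))
      = ENNReal.ofReal ((1 + a*z.1) ^ (-(3:ℝ)/2) * (1 - (z.1^2 + z.2^2)) ^ (-(1:ℝ)/2)) := by
    intro z; rw [hψ0 z, hψn z]
  calc (∫⁻ z in {z : ℝ × ℝ | z.1^2 + z.2^2 ≤ 1},
        ENNReal.ofReal ((1 + a * (ψ z) 0) ^ (-(3:ℝ)/2) * (1 - ‖ψ z‖^2) ^ (-(1:ℝ)/2))).toReal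
      = (∫⁻ z in {z : ℝ × ℝ | z.1^2 + z.2^2 ≤ 1},
        ENNReal.ofReal ((1 + a*z.1) ^ (-(3:ℝ)/2) * (1 - (z.1^2 + z.2^2)) ^ (-(1:ℝ)/2))).toReal := by
        congr 1; exact lintegral_congr fun z => this z
    _ ≤ (ENNReal.ofReal (4 * Real.pi / Real.sqrt (1 - a^2))).toReal :=
        ENNReal.toReal_mono ENNReal.ofReal_ne_top (stmt_2_aux_planar a ha0 ha1)
    _ = 4 * Real.pi / Real.sqrt (1 - a^2) := ENNReal.toReal_ofReal hRHS

lemma stmt_2_aux_key (q : EuclideanSpace ℝ (Fin 2)) (hq : ‖q‖ < 1) :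
    (∫ ξ in Metric.closedBall (0 : EuclideanSpace ℝ (Fin 2)) 1,
      (1 + ⟪q, ξ⟫) ^ (-(3:ℝ)/2) * (1 - ‖ξ‖^2) ^ (-(1:ℝ)/2))
    ≤ 4 * Real.pi / Real.sqrt (1 - ‖q‖^2) := by
  -- choose a unit vector u with ⟪q, ξ⟫ = ‖q‖ * ⟪u, ξ⟫
  obtain ⟨u, hu, hqu⟩ : ∃ u : EuclideanSpace ℝ (Fin 2), ‖u‖ = 1 ∧
      ∀ ξ, ⟪q, ξ⟫ = ‖q‖ * ⟪u, ξ⟫ := by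
    by_cases h : q = 0
    · exact ⟨EuclideanSpace.single 0 1, by simp, by simp [h]⟩
    · refine ⟨‖q‖⁻¹ • q, ?_, ?_⟩
      · rw [norm_smul, norm_inv, norm_norm, inv_mul_cancel₀ (norm_ne_zero_iff.2 h)]
      · intro ξ
        rw [real_inner_smul_left, ← mul_assoc, mul_inv_cancel₀ (norm_ne_zero_iff.2 h), one_mul]
  -- orthonormal basis with first vector u
  have hsum : u 0 ^ 2 + u 1 ^ 2 = 1 := by
    have h2 : ‖u‖^2 = 1 := by rw [hu]; norm_num
    rw [EuclideanSpace.norm_eq, Real.sq_sqrt (by positivity), Fin.sum_univ_two,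
      Real.norm_eq_abs, Real.norm_eq_abs, sq_abs, sq_abs] at h2
    exact h2
  set v : EuclideanSpace ℝ (Fin 2) := (WithLp.equiv 2 (Fin 2 → ℝ)).symm ![-(u 1), u 0] with hv
  have hv0 : v 0 = -(u 1) := rfl
  have hv1 : v 1 = u 0 := rfl
  have hvnorm : ‖v‖ = 1 := by
    rw [EuclideanSpace.norm_eq, Fin.sum_univ_two, hv0, hv1, Real.norm_eq_abs,
      Real.norm_eq_abs, sq_abs, sq_abs, neg_pow, show (-1:ℝ)^2 * u 1^2 + u 0^2 = 1 by nlinarith]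
    exact Real.sqrt_one
  have huv : ⟪u, v⟫ = 0 := by
    simp only [PiLp.inner_apply, RCLike.inner_apply, conj_trivial, Fin.sum_univ_two,
      hv0, hv1]
    ring
  have horth : Orthonormal ℝ ![u, v] := by
    constructor
    · rw [Fin.forall_fin_two]
      constructor <;> simp [hu, hvnorm]
    · intro i j hij
      fin_cases i <;> fin_cases j <;> simp_all [real_inner_comm] <;> ring
  have hcard : Fintype.card (Fin 2) = Module.finrank ℝ (EuclideanSpace ℝ (Fin 2)) := by
    simp [finrank_euclideanSpace_fin]
  set B : OrthonormalBasis (Fin 2) ℝ (EuclideanSpace ℝ (Fin 2)) :=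
    (basisOfOrthonormalOfCardEqFinrank horth hcard).toOrthonormalBasis
      (by rwa [coe_basisOfOrthonormalOfCardEqFinrank]) with hB
  have hB0 : B 0 = u := by
    rw [hB, Module.Basis.coe_toOrthonormalBasis, coe_basisOfOrthonormalOfCardEqFinrank]
    rfl
  have hmp : MeasurePreserving (⇑B.repr.symm) volume volume :=
    B.measurePreserving_repr_symm
  have hemb : MeasurableEmbedding (⇑B.repr.symm) :=
    B.measurableEquiv.symm.measurableEmbedding
  rw [← hmp.setIntegral_preimage_emb hemb]
  have hpre : ⇑B.repr.symm ⁻¹' Metric.closedBall 0 1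
      = Metric.closedBall (0 : EuclideanSpace ℝ (Fin 2)) 1 := by
    ext x
    simp [Metric.mem_closedBall, dist_zero_right]
  have hx0 : ∀ x : EuclideanSpace ℝ (Fin 2), ⟪u, B.repr.symm x⟫ = x 0 := by
    intro x
    rw [← hB0, ← OrthonormalBasis.repr_apply_apply]
    simp
  rw [hpre]
  simp_rw [hqu, hx0, LinearIsometryEquiv.norm_map]
  exact stmt_2_aux_keyE ‖q‖ (norm_nonneg q) hq

theorem stmt_2 (p : EuclideanSpace ℝ (Fin 2)) :
    (∫ ξ in Metric.closedBall (0 : EuclideanSpace ℝ (Fin 2)) 1,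
        (1 + ⟪(Real.sqrt (1 + ‖p‖ ^ 2))⁻¹ • p, ξ⟫) ^ (-(3 : ℝ) / 2) *
          (1 - ‖ξ‖ ^ 2) ^ (-(1 : ℝ) / 2)) ≤
      4 * Real.pi * Real.sqrt (1 + ‖p‖ ^ 2) := by
  have hs : (0:ℝ) < Real.sqrt (1 + ‖p‖^2) := Real.sqrt_pos.2 (by positivity)
  set s := Real.sqrt (1 + ‖p‖^2) with hsdef
  set q : EuclideanSpace ℝ (Fin 2) := s⁻¹ • p with hqdef
  have hs2 : s^2 = 1 + ‖p‖^2 := Real.sq_sqrt (by positivity)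
  have hqnorm : ‖q‖ = ‖p‖ / s := by
    rw [hqdef, norm_smul, norm_inv, Real.norm_eq_abs, abs_of_pos hs, inv_mul_eq_div]
  have hq : ‖q‖ < 1 := by
    rw [hqnorm, div_lt_one hs, hsdef]
    rw [show ‖p‖ = Real.sqrt (‖p‖^2) from (Real.sqrt_sq (norm_nonneg p)).symm]
    exact Real.sqrt_lt_sqrt (by positivity)
      (by nlinarith [Real.sq_sqrt (sq_nonneg ‖p‖)])
  have h2 : 1 - ‖q‖^2 = (1 + ‖p‖^2)⁻¹ := by
    rw [hqnorm, div_pow, hs2]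
    have h1p : (0:ℝ) < 1 + ‖p‖^2 := by positivity
    field_simp
    ring
  have h3 : Real.sqrt (1 - ‖q‖^2) = s⁻¹ := by
    rw [h2, Real.sqrt_inv, hsdef]
  have := stmt_2_aux_key q hq
  rw [h3, div_inv_eq_mul] at this
  exact this
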